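/- Let I be a monomial ideal in the polynomial ring K[x_1, …, x_n] over a field K, and let u be a monomial which is a non-zerodivisor modulo I (that is, I : u = I). Then there exists a positive integer k such that (C(I), u^k) ⊆ C((I, u)), where (I, u) denotes the ideal I + (u) and (C(I), u^k) denotes C(I) + (u^k). -/

import Mathlib

noncomputable section

universe u v

/-- The `R`-algebra map `φ : T = R[y_i : i ∈ ι] → R[t]` sending `y_i ↦ f i · t`. -/
def reesHom {R : Type u} [CommRing R] {ι : Type v} (f : ι → R) :
    MvPolynomial ι R →ₐ[R] Polynomial R :=
  MvPolynomial.aeval fun i => Polynomial.C (f i) * Polynomial.X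

/-- `J`, the defining ideal of the Rees algebra of the ideal generated by `f`. -/
def reesJ {R : Type u} [CommRing R] {ι : Type v} (f : ι → R) :
    Ideal (MvPolynomial ι R) :=
  RingHom.ker (reesHom f)

/-- `L`, the ideal of `T` generated by the linear relations `∑ aᵢ yᵢ` with `∑ aᵢ fᵢ = 0`. -/
def linRel {R : Type u} [CommRing R] {ι : Type v} (f : ι → R) :
    Ideal (MvPolynomial ι R) :=
  Ideal.span {p | ∃ a : ι →₀ R, (a.sum fun i r => r * f i) = 0 ∧
    p = a.sum fun i r => MvPolynomial.C r * MvPolynomial.X i}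

/-- The conductor `C(I) = L :_R J = {r ∈ R : r J ⊆ L}`. -/
def conductorIdeal {R : Type u} [CommRing R] {ι : Type v} (f : ι → R) : Ideal R :=
  Submodule.colon (Submodule.restrictScalars R (linRel f))
    (Submodule.restrictScalars R (reesJ f))

/-- The ideal generated by `f` is of linear type if `J = L`. -/
def IsLinearType {R : Type u} [CommRing R] {ι : Type v} (f : ι → R) : Prop :=
  reesJ f = linRel f

end

namespace Stmt10Aux

open MvPolynomial

variable {R : Type*} [CommRing R] {σ : Type*}

lemma degree_add' (d e : σ →₀ ℕ) : (d + e).degree = d.degree + e.degree := by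
  simp only [Finsupp.degree_eq_weight_one]
  exact map_add _ _ _

lemma degree_single' (j : σ) (b : ℕ) : (Finsupp.single j b).degree = b := by
  classical
  rw [Finsupp.degree]
  by_cases hb : b = 0
  · simp [hb]
  · exact Finsupp.degree_single j b

section General

variable (f : σ → R)

lemma reesHom_monomial (a : σ →₀ ℕ) (c : R) :
    reesHom f (monomial a c) =
      Polynomial.C (c * a.prod fun i e => f i ^ e) * Polynomial.X ^ a.degree := by
  rw [reesHom, aeval_monomial]
  have h1 : (a.prod fun i e => (Polynomial.C (f i) * Polynomial.X) ^ e) =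
      Polynomial.C (a.prod fun i e => f i ^ e) * Polynomial.X ^ a.degree := by
    rw [Finsupp.prod, Finsupp.prod, Finsupp.degree]
    rw [Finset.prod_congr rfl (fun i _ => mul_pow (Polynomial.C (f i)) Polynomial.X (a i)),
      Finset.prod_mul_distrib, Finset.prod_pow_eq_pow_sum]
    simp only [map_prod, map_pow]
    rfl
  rw [h1, Polynomial.algebraMap_eq, ← mul_assoc, ← map_mul]

lemma coeff_reesHom (p : MvPolynomial σ R) (s : ℕ) :
    (reesHom f p).coeff s = eval f (homogeneousComponent s p) := by
  classical
  conv_lhs => rw [p.as_sum]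
  rw [map_sum, Polynomial.finset_sum_coeff, homogeneousComponent_apply, map_sum,
    Finset.sum_filter]
  refine Finset.sum_congr rfl fun d _ => ?_
  rw [reesHom_monomial, Polynomial.coeff_C_mul, Polynomial.coeff_X_pow, eval_monomial]
  by_cases h : d.degree = s
  · simp [h]
  · simp [h, Ne.symm h]

lemma eval_one_reesHom (p : MvPolynomial σ R) :
    Polynomial.eval 1 (reesHom f p) = eval f p := by
  induction p using MvPolynomial.induction_on with
  | C a => simp [reesHom]
  | add p q hp hq => simp only [map_add, Polynomial.eval_add, hp, hq]
  | mul_X p i hp =>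
    have hX : reesHom f (X i) = Polynomial.C (f i) * Polynomial.X := aeval_X _ i
    rw [map_mul, hX, Polynomial.eval_mul, Polynomial.eval_mul, Polynomial.eval_C,
      Polynomial.eval_X, mul_one, hp, map_mul, eval_X]

lemma mem_reesJ_iff (p : MvPolynomial σ R) :
    p ∈ reesJ f ↔ ∀ s, eval f (homogeneousComponent s p) = 0 := by
  rw [reesJ, RingHom.mem_ker]
  constructor
  · intro h s
    rw [← coeff_reesHom, h, Polynomial.coeff_zero]
  · intro h
    ext s
    rw [coeff_reesHom, h, Polynomial.coeff_zero]

lemma reesJ_eval_zero {p : MvPolynomial σ R} (hp : p ∈ reesJ f) : eval f p = 0 := by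
  rw [← eval_one_reesHom]
  rw [reesJ, RingHom.mem_ker] at hp
  rw [hp, Polynomial.eval_zero]

lemma homogeneousComponent_mem_reesJ {p : MvPolynomial σ R} (hp : p ∈ reesJ f) (s : ℕ) :
    homogeneousComponent s p ∈ reesJ f := by
  rw [mem_reesJ_iff] at hp ⊢
  intro s'
  rw [homogeneousComponent_of_mem (homogeneousComponent_mem s p)]
  split
  · exact hp s
  · rw [map_zero]

lemma mem_reesJ_iff_eval {p : MvPolynomial σ R} {s : ℕ} (hp : p.IsHomogeneous s) :
    p ∈ reesJ f ↔ eval f p = 0 := by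
  constructor
  · exact reesJ_eval_zero f
  · intro h
    rw [mem_reesJ_iff]
    intro s'
    rw [homogeneousComponent_of_mem ((mem_homogeneousSubmodule s p).mpr hp)]
    split
    · exact h
    · rw [map_zero]

lemma prod_pow_mem (d : σ →₀ ℕ) (s : Finset σ) :
    (∏ i ∈ s, f i ^ d i) ∈ (Ideal.span (Set.range f)) ^ (∑ i ∈ s, d i) := by
  classical
  induction s using Finset.induction_on with
  | empty => simp [Ideal.one_eq_top]
  | insert _ _ h ih =>
    rw [Finset.prod_insert h, Finset.sum_insert h, pow_add]
    exact Ideal.mul_mem_mul (Ideal.pow_mem_pow (Ideal.subset_span (Set.mem_range_self _)) _) ih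

lemma eval_isHomogeneous_mem {p : MvPolynomial σ R} {e : ℕ} (hp : p.IsHomogeneous e) :
    eval f p ∈ Ideal.span (Set.range f) ^ e := by
  rw [eval_eq]
  refine Submodule.sum_mem _ fun d hd => ?_
  have hdeg : d.degree = e := by
    rw [Finsupp.degree_eq_weight_one]
    exact hp (mem_support_iff.mp hd)
  have h2 := prod_pow_mem f d d.support
  rw [show (∑ i ∈ d.support, d i) = e from hdeg] at h2
  exact Ideal.mul_mem_left _ _ h2

end General

section FinStuff

variable {m : ℕ} (f : Fin m → R) (u : R)

lemma exists_homog_lift : ∀ {e : ℕ} {h : R}, h ∈ Ideal.span (Set.range f) ^ e →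
    ∃ H : MvPolynomial (Fin m) R, H.IsHomogeneous e ∧ eval f H = h := by
  intro e
  induction e with
  | zero =>
    intro h _
    exact ⟨C h, isHomogeneous_C _ _, eval_C _⟩
  | succ e ih =>
    intro h hh
    rw [pow_succ] at hh
    refine Submodule.mul_induction_on hh ?_ ?_
    · intro x hx y hy
      obtain ⟨H, hH, hHe⟩ := ih hx
      obtain ⟨c, hc⟩ := (Submodule.mem_span_range_iff_exists_fun R).mp hy
      refine ⟨H * ∑ i, C (c i) * X i,
        hH.mul (IsHomogeneous.sum _ _ _ fun i _ => isHomogeneous_C_mul_X _ _), ?_⟩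
      rw [map_mul, hHe, map_sum]
      simp only [map_mul, eval_C, eval_X]
      rw [← hc]
      simp [smul_eq_mul]
    · rintro x y ⟨Hx, hHx, hHxe⟩ ⟨Hy, hHy, hHye⟩
      exact ⟨Hx + Hy, hHx.add hHy, by rw [map_add, hHxe, hHye]⟩

lemma rel_basic (j : Fin (m + 1)) :
    (C ((Fin.snoc f u : Fin (m + 1) → R) j) * X (Fin.last m) - C u * X j : MvPolynomial (Fin (m + 1)) R)
      ∈ linRel (Fin.snoc f u) := by
  classical
  by_cases hj : j = Fin.last m
  · subst hj
    rw [Fin.snoc_last, sub_self]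
    exact Ideal.zero_mem _
  · apply Ideal.subset_span
    refine ⟨Finsupp.single j (-u) + Finsupp.single (Fin.last m) ((Fin.snoc f u : Fin (m + 1) → R) j), ?_, ?_⟩
    · rw [Finsupp.sum_add_index' (h := fun i r => r * (Fin.snoc f u : Fin (m + 1) → R) i)
        (fun i => zero_mul _) (fun i b₁ b₂ => add_mul _ _ _),
        Finsupp.sum_single_index (h := fun i r => r * (Fin.snoc f u : Fin (m + 1) → R) i)
        (zero_mul _),
        Finsupp.sum_single_index (h := fun i r => r * (Fin.snoc f u : Fin (m + 1) → R) i)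
        (zero_mul _), Fin.snoc_last]
      ring
    · rw [Finsupp.sum_add_index' (h := fun i r => (C r * X i : MvPolynomial (Fin (m + 1)) R))
        (fun i => by show C (0 : R) * X i = 0; rw [map_zero, zero_mul])
        (fun i b₁ b₂ => by show C (b₁ + b₂) * X i = C b₁ * X i + C b₂ * X i
                           rw [map_add, add_mul]),
        Finsupp.sum_single_index (h := fun i r => (C r * X i : MvPolynomial (Fin (m + 1)) R))
        (by show C (0 : R) * X j = 0; rw [map_zero, zero_mul]),
        Finsupp.sum_single_index (h := fun i r => (C r * X i : MvPolynomial (Fin (m + 1)) R))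
        (by show C (0 : R) * X (Fin.last m) = 0; rw [map_zero, zero_mul]), map_neg]
      ring

lemma mk_rel (j : Fin (m + 1)) :
    Ideal.Quotient.mk (linRel (Fin.snoc f u)) (C u * X j)
      = Ideal.Quotient.mk (linRel (Fin.snoc f u)) (C ((Fin.snoc f u : Fin (m + 1) → R) j) * X (Fin.last m)) := by
  rw [Ideal.Quotient.eq]
  have := (linRel (Fin.snoc f u)).neg_mem (rel_basic f u j)
  simpa using this

lemma mk_pow_monomial (a : Fin (m + 1) →₀ ℕ) :
    Ideal.Quotient.mk (linRel (Fin.snoc f u)) (C u ^ a.degree * monomial a 1)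
      = Ideal.Quotient.mk (linRel (Fin.snoc f u))
          (C (a.prod fun i e => (Fin.snoc f u : Fin (m + 1) → R) i ^ e) * X (Fin.last m) ^ a.degree) := by
  classical
  induction a using Finsupp.induction with
  | zero => simp
  | single_add i b a hia hb ih =>
    rw [degree_add', degree_single', monomial_single_add]
    have h1 : C u ^ (b + a.degree) * (X i ^ b * monomial a (1 : R))
        = (C u * X i) ^ b * (C u ^ a.degree * monomial a 1) := by ring
    rw [h1, map_mul, map_pow, mk_rel, ih, ← map_pow, ← map_mul]
    congr 1
    rw [Finsupp.prod_add_index' (h := fun j e => (Fin.snoc f u : Fin (m + 1) → R) j ^ e)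
      (fun j => pow_zero _) (fun j b₁ b₂ => pow_add _ _ _),
      Finsupp.prod_single_index (h := fun j e => (Fin.snoc f u : Fin (m + 1) → R) j ^ e)
      (pow_zero _)]
    rw [mul_pow, ← map_pow, map_mul]
    ring

lemma pow_u_mul_mem {p : MvPolynomial (Fin (m + 1)) R} {s : ℕ}
    (hp : p.IsHomogeneous s) (h0 : eval (Fin.snoc f u) p = 0) :
    C u ^ s * p ∈ linRel (Fin.snoc f u) := by
  classical
  rw [← Ideal.Quotient.eq_zero_iff_mem]
  conv_lhs => rw [p.as_sum, Finset.mul_sum, map_sum]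
  have hterm : ∀ d ∈ p.support,
      Ideal.Quotient.mk (linRel (Fin.snoc f u)) (C u ^ s * monomial d (coeff d p))
        = Ideal.Quotient.mk (linRel (Fin.snoc f u))
            (C (coeff d p * d.prod fun i e => (Fin.snoc f u : Fin (m + 1) → R) i ^ e) * X (Fin.last m) ^ s) := by
    intro d hd
    have hdeg : d.degree = s := by
      rw [Finsupp.degree_eq_weight_one]
      exact hp (mem_support_iff.mp hd)
    have hmon : monomial d (coeff d p) = C (coeff d p) * monomial d 1 := by
      rw [C_mul_monomial, mul_one]
    rw [hmon, show C u ^ s * (C (coeff d p) * monomial d 1)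
        = C (coeff d p) * (C u ^ s * monomial d 1) from by ring, map_mul, ← hdeg,
      mk_pow_monomial, hdeg, ← map_mul, ← mul_assoc, ← map_mul]
  rw [Finset.sum_congr rfl hterm, ← map_sum, ← Finset.sum_mul, ← map_sum]
  have : (∑ d ∈ p.support, coeff d p * d.prod fun i e => (Fin.snoc f u : Fin (m + 1) → R) i ^ e)
      = eval (Fin.snoc f u) p := by
    rw [eval_eq]
    rfl
  rw [this, h0, map_zero, zero_mul, map_zero]

lemma exists_k [IsNoetherianRing R] :
    ∃ k : ℕ, 0 < k ∧ ∀ p ∈ reesJ (Fin.snoc f u), C u ^ k * p ∈ linRel (Fin.snoc f u) := by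
  classical
  obtain ⟨S, hS⟩ := IsNoetherian.noetherian (reesJ (Fin.snoc f u))
  set k := (S.sup fun q => q.totalDegree) + 1 with hk
  have key : ∀ v ∈ (S : Set (MvPolynomial (Fin (m + 1)) R)),
      C u ^ k * v ∈ linRel (Fin.snoc f u) := by
    intro v hv
    have hvJ : v ∈ reesJ (Fin.snoc f u) := by
      rw [← hS]
      exact Ideal.subset_span hv
    have hdec : C u ^ k * v
        = ∑ i ∈ Finset.range (v.totalDegree + 1), C u ^ k * homogeneousComponent i v := by
      rw [← Finset.mul_sum, sum_homogeneousComponent]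
    rw [hdec]
    refine Submodule.sum_mem _ fun i hi => ?_
    have hik : i ≤ k := by
      have h1 : i ≤ v.totalDegree := Nat.lt_succ_iff.mp (Finset.mem_range.mp hi)
      have h2 : v.totalDegree ≤ S.sup fun q => q.totalDegree := Finset.le_sup hv
      omega
    have hsplit : C u ^ k * homogeneousComponent i v
        = C u ^ (k - i) * (C u ^ i * homogeneousComponent i v) := by
      rw [← mul_assoc, ← pow_add]
      congr 2
      omega
    rw [hsplit]
    refine Ideal.mul_mem_left _ _ (pow_u_mul_mem f u (homogeneousComponent_isHomogeneous i v) ?_)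
    exact reesJ_eval_zero _ (homogeneousComponent_mem_reesJ _ hvJ i)
  refine ⟨k, Nat.succ_pos _, ?_⟩
  intro p hp
  let M : Ideal (MvPolynomial (Fin (m + 1)) R) :=
    { carrier := {q | C u ^ k * q ∈ linRel (Fin.snoc f u)}
      zero_mem' := by simp
      add_mem' := fun {a b} ha hb => by
        simp only [Set.mem_setOf_eq, mul_add] at *
        exact Submodule.add_mem _ ha hb
      smul_mem' := fun c q hq => by
        simp only [Set.mem_setOf_eq, smul_eq_mul] at *
        rw [show C u ^ k * (c * q) = c * (C u ^ k * q) from by ring]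
        exact Ideal.mul_mem_left _ _ hq }
  have hle : reesJ (Fin.snoc f u) ≤ M := by
    rw [← hS]
    exact Ideal.span_le.mpr key
  exact hle hp

lemma reesHom_rename (q : MvPolynomial (Fin m) R) :
    reesHom (Fin.snoc f u) (rename Fin.castSucc q) = reesHom f q := by
  have hcomp : ((fun i => Polynomial.C ((Fin.snoc f u : Fin (m + 1) → R) i) * Polynomial.X) ∘ Fin.castSucc)
      = fun i : Fin m => Polynomial.C (f i) * Polynomial.X := by
    funext i
    simp
  rw [reesHom, reesHom, aeval_rename, hcomp]

lemma eval_snoc_rename (q : MvPolynomial (Fin m) R) :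
    eval (Fin.snoc f u) (rename Fin.castSucc q) = eval f q := by
  rw [eval_rename, show Fin.snoc f u ∘ Fin.castSucc = f from funext fun i => by simp]

lemma rename_mem_linRel {q : MvPolynomial (Fin m) R} (hq : q ∈ linRel f) :
    rename Fin.castSucc q ∈ linRel (Fin.snoc f u) := by
  have hmap : rename (R := R) Fin.castSucc q
      ∈ Ideal.map (rename (R := R) (Fin.castSucc (n := m))
        : MvPolynomial (Fin m) R →ₐ[R] MvPolynomial (Fin (m + 1)) R) (linRel f) :=
    Ideal.mem_map_of_mem _ hq
  rw [linRel, Ideal.map_span] at hmap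
  refine Ideal.span_mono ?_ hmap
  rintro _ ⟨p, ⟨a, ha0, rfl⟩, rfl⟩
  refine ⟨a.mapDomain Fin.castSucc, ?_, ?_⟩
  · rw [Finsupp.sum_mapDomain_index_inj (Fin.castSucc_injective m)]
    rw [← ha0]
    apply Finsupp.sum_congr
    intro i _
    rw [Fin.snoc_castSucc]
  · rw [Finsupp.sum_mapDomain_index_inj (Fin.castSucc_injective m)]
    rw [map_finsuppSum]
    apply Finsupp.sum_congr
    intro i _
    rw [map_mul, rename_C, rename_X]

end FinStuff

section FinStuff2

variable {m : ℕ}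

/-- The truncation map killing the last variable. -/
noncomputable def truncMap : MvPolynomial (Fin (m + 1)) R →ₐ[R] MvPolynomial (Fin m) R :=
  aeval (Fin.snoc X 0)

variable (f : Fin m → R) (u : R)

lemma rho_pi_monomial (a : Fin (m + 1) →₀ ℕ) (c : R) :
    rename Fin.castSucc (truncMap (monomial a c))
      = if a (Fin.last m) = 0 then monomial a c else 0 := by
  classical
  rw [truncMap, aeval_monomial, Finsupp.prod_fintype _ _ (fun i => pow_zero _),
    Fin.prod_univ_castSucc]
  simp only [Fin.snoc_castSucc, Fin.snoc_last, algebraMap_eq]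
  by_cases h : a (Fin.last m) = 0
  · rw [if_pos h, h, pow_zero, mul_one, map_mul, rename_C, map_prod]
    simp only [map_pow, rename_X]
    conv_rhs => rw [monomial_eq, Finsupp.prod_fintype _ _ (fun i => pow_zero _),
      Fin.prod_univ_castSucc, h, pow_zero, mul_one]
  · rw [if_neg h, zero_pow h]
    simp

lemma rho_pi_isHomogeneous {F : MvPolynomial (Fin (m + 1)) R} {s : ℕ} (hF : F.IsHomogeneous s) :
    (rename Fin.castSucc (truncMap F)).IsHomogeneous s := by
  classical
  have hrepr : rename Fin.castSucc (truncMap F)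
      = ∑ d ∈ F.support, if d (Fin.last m) = 0 then monomial d (coeff d F) else 0 := by
    conv_lhs => rw [F.as_sum, map_sum, map_sum]
    exact Finset.sum_congr rfl fun d _ => rho_pi_monomial d _
  rw [hrepr]
  refine IsHomogeneous.sum _ _ _ fun d hd => ?_
  split
  · refine isHomogeneous_monomial _ ?_
    rw [Finsupp.degree_eq_weight_one]
    exact hF (mem_support_iff.mp hd)
  · exact isHomogeneous_zero _ _ _

lemma exists_decomp (p : MvPolynomial (Fin (m + 1)) R) :
    ∃ q, p = rename Fin.castSucc (truncMap p) + X (Fin.last m) * q := by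
  classical
  suffices h : X (Fin.last m) ∣ p - rename Fin.castSucc (truncMap p) by
    obtain ⟨q, hq⟩ := h
    exact ⟨q, by rw [← hq]; ring⟩
  have hrepr : p - rename Fin.castSucc (truncMap p)
      = ∑ d ∈ p.support, (monomial d (coeff d p)
          - rename Fin.castSucc (truncMap (monomial d (coeff d p)))) := by
    rw [Finset.sum_sub_distrib, ← map_sum, ← map_sum, ← p.as_sum]
  rw [hrepr]
  refine Finset.dvd_sum fun d hd => ?_
  rw [rho_pi_monomial]
  by_cases h : d (Fin.last m) = 0
  · rw [if_pos h, sub_self]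
    exact dvd_zero _
  · rw [if_neg h, sub_zero]
    refine ⟨monomial (d - Finsupp.single (Fin.last m) 1) (coeff d p), ?_⟩
    have hle : Finsupp.single (Fin.last m) 1 ≤ d :=
      Finsupp.single_le_iff.mpr (Nat.one_le_iff_ne_zero.mpr h)
    set c := coeff d p with hc
    conv_lhs => rw [show d = Finsupp.single (Fin.last m) 1
      + (d - Finsupp.single (Fin.last m) 1) from (add_tsub_cancel_of_le hle).symm]
    rw [monomial_single_add, pow_one]

lemma isHomogeneous_of_X_mul {j : Fin (m + 1)} {q : MvPolynomial (Fin (m + 1)) R} {s : ℕ}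
    (h : (X j * q).IsHomogeneous (s + 1)) : q.IsHomogeneous s := by
  intro d hd
  have h2 : coeff (Finsupp.single j 1 + d) (X j * q) ≠ 0 := by
    rw [coeff_X_mul]
    exact hd
  have h4 := h h2
  rw [map_add] at h4
  have h5 : (Finsupp.weight 1) (Finsupp.single j 1) = 1 := by
    have := degree_single' j 1
    rwa [Finsupp.degree_eq_weight_one] at this
  rw [h5] at h4
  omega

lemma starL {w : R} {e : ℕ} (hw : w ∈ Ideal.span (Set.range f) ^ (e + 1)) :
    ∃ A W' : MvPolynomial (Fin m) R, A.IsHomogeneous e ∧ W'.IsHomogeneous (e + 1) ∧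
      eval f A = w ∧ eval f W' = w ∧
      Ideal.Quotient.mk (linRel (Fin.snoc f u)) (rename Fin.castSucc A * X (Fin.last m))
        = Ideal.Quotient.mk (linRel (Fin.snoc f u)) (C u * rename Fin.castSucc W') := by
  rw [pow_succ] at hw
  refine Submodule.mul_induction_on hw ?_ ?_
  · intro x hx y hy
    obtain ⟨H, hH, hHe⟩ := exists_homog_lift f hx
    obtain ⟨c, hc⟩ := (Submodule.mem_span_range_iff_exists_fun R).mp hy
    have hsum : (∑ i, c i * f i) = y := by
      rw [← hc]
      simp [smul_eq_mul]
    refine ⟨C y * H, (∑ i, C (c i) * X i) * H, hH.C_mul y, ?_, ?_, ?_, ?_⟩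
    · have h1 := (IsHomogeneous.sum Finset.univ (fun i => C (c i) * X i) 1
        fun i _ => isHomogeneous_C_mul_X (c i) i).mul hH
      rwa [Nat.add_comm] at h1
    · rw [map_mul, eval_C, hHe, mul_comm]
    · rw [map_mul, hHe, map_sum]
      simp only [map_mul, eval_C, eval_X]
      rw [hsum, mul_comm]
    · have hCy : (C y : MvPolynomial (Fin (m + 1)) R) = ∑ i, C (c i) * C (f i) := by
        rw [← hsum]
        simp only [map_sum, map_mul]
      have hdiff : rename Fin.castSucc (C y * H) * X (Fin.last m)
          - C u * rename Fin.castSucc ((∑ i, C (c i) * X i) * H)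
          = ∑ i, (C (c i) * rename Fin.castSucc H) *
              (C (f i) * X (Fin.last m) - C u * X (Fin.castSucc i)) := by
        rw [map_mul, rename_C, hCy, map_mul, map_sum]
        simp only [map_mul, rename_C, rename_X]
        rw [Finset.sum_mul, Finset.sum_mul, Finset.sum_mul, Finset.mul_sum,
          ← Finset.sum_sub_distrib]
        exact Finset.sum_congr rfl fun i _ => by ring
      rw [Ideal.Quotient.eq, hdiff]
      refine Submodule.sum_mem _ fun i _ => ?_
      have hb := rel_basic f u (Fin.castSucc i)
      rw [Fin.snoc_castSucc] at hb
      exact Ideal.mul_mem_left _ _ hb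
  · rintro x y ⟨A₁, W₁, h1, h2, h3, h4, h5⟩ ⟨A₂, W₂, g1, g2, g3, g4, g5⟩
    refine ⟨A₁ + A₂, W₁ + W₂, h1.add g1, h2.add g2, by rw [map_add, h3, g3],
      by rw [map_add, h4, g4], ?_⟩
    rw [map_add, add_mul, map_add, h5, g5, map_add, mul_add, map_add]

lemma stepA (hcolon : ∀ e (w : R), u * w ∈ Ideal.span (Set.range f) ^ e →
      w ∈ Ideal.span (Set.range f) ^ e)
    (r : R) (hr : ∀ p ∈ reesJ f, C r * p ∈ linRel f) :
    ∀ s (F : MvPolynomial (Fin (m + 1)) R), F.IsHomogeneous s →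
      F ∈ reesJ (Fin.snoc f u) → C r * F ∈ linRel (Fin.snoc f u) := by
  intro s
  induction s with
  | zero =>
    intro F hF hFJ
    have h0 : homogeneousComponent 0 F = F := by
      rw [homogeneousComponent_of_mem ((mem_homogeneousSubmodule 0 F).mpr hF), if_pos rfl]
    have h1 : C (coeff 0 F) = F := by
      rw [← homogeneousComponent_zero]
      exact h0
    have h2 : eval (Fin.snoc f u) F = coeff 0 F := by
      conv_lhs => rw [← h1]
      rw [eval_C]
    have h3 : coeff 0 F = 0 := by
      rw [← h2]
      exact reesJ_eval_zero _ hFJ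
    have h4 : F = 0 := by
      rw [← h1, h3, map_zero]
    rw [h4, mul_zero]
    exact Ideal.zero_mem _
  | succ s ih =>
    intro F hF hFJ
    obtain ⟨q, hdecomp⟩ := exists_decomp F
    have hρπ : (rename Fin.castSucc (truncMap F)).IsHomogeneous (s + 1) :=
      rho_pi_isHomogeneous hF
    have h6 : X (Fin.last m) * q = F - rename Fin.castSucc (truncMap F) := by
      nth_rewrite 1 [hdecomp]
      ring
    have hXq : (X (Fin.last m) * q).IsHomogeneous (s + 1) := by
      have h5 := hF.sub hρπ
      rwa [← h6] at h5
    have hq : q.IsHomogeneous s := isHomogeneous_of_X_mul hXq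
    have hevalF : eval (Fin.snoc f u) F = 0 := reesJ_eval_zero _ hFJ
    have h1 : eval f (truncMap F) + u * eval (Fin.snoc f u) q = 0 := by
      rw [hdecomp] at hevalF
      rwa [map_add, map_mul, eval_X, Fin.snoc_last, eval_snoc_rename] at hevalF
    have hπhomog : (truncMap (R := R) F).IsHomogeneous (s + 1) :=
      (IsHomogeneous.rename_isHomogeneous_iff (Fin.castSucc_injective m)).mp hρπ
    have hπI : eval f (truncMap F) ∈ Ideal.span (Set.range f) ^ (s + 1) :=
      eval_isHomogeneous_mem f hπhomog
    have hw : u * eval (Fin.snoc f u) q ∈ Ideal.span (Set.range f) ^ (s + 1) := by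
      rw [eq_neg_of_add_eq_zero_right h1]
      exact neg_mem hπI
    have hwI := hcolon (s + 1) _ hw
    obtain ⟨A, W', hA, hW', hAe, hW'e, hrel⟩ := starL f u hwI
    set q' := q - rename Fin.castSucc A with hq'
    have hq'h : q'.IsHomogeneous s := hq.sub hA.rename_isHomogeneous
    have hq'J : q' ∈ reesJ (Fin.snoc f u) := by
      rw [mem_reesJ_iff_eval _ hq'h, map_sub, eval_snoc_rename, hAe, sub_self]
    have ihq := ih q' hq'h hq'J
    have hGh : (truncMap F + C u * W').IsHomogeneous (s + 1) := hπhomog.add (hW'.C_mul u)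
    have hGe : eval f (truncMap F + C u * W') = 0 := by
      rw [map_add, map_mul, eval_C, hW'e]
      exact h1
    have hGJ : truncMap F + C u * W' ∈ reesJ f := (mem_reesJ_iff_eval f hGh).mpr hGe
    have hfirst : C r * (rename Fin.castSucc (truncMap F)
        + rename Fin.castSucc A * X (Fin.last m)) ∈ linRel (Fin.snoc f u) := by
      rw [← Ideal.Quotient.eq_zero_iff_mem, map_mul, map_add, hrel, ← map_add, ← map_mul]
      have e2 : C r * (rename Fin.castSucc (truncMap F) + C u * rename Fin.castSucc W')
          = rename Fin.castSucc (C r * (truncMap F + C u * W')) := by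
        rw [map_mul, map_add, map_mul, rename_C, rename_C]
      rw [e2, Ideal.Quotient.eq_zero_iff_mem]
      exact rename_mem_linRel f u (hr _ hGJ)
    have hqsplit : q = q' + rename Fin.castSucc A := by
      rw [hq', sub_add_cancel]
    have hkey : C r * F = C r * (rename Fin.castSucc (truncMap F)
        + rename Fin.castSucc A * X (Fin.last m)) + X (Fin.last m) * (C r * q') := by
      nth_rewrite 1 [hdecomp]
      rw [hqsplit]
      ring
    rw [hkey]
    exact Submodule.add_mem _ hfirst (Ideal.mul_mem_left _ _ ihq)

end FinStuff2

section Monomial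

variable {K : Type} [Field K] {n : ℕ}

lemma colon_pow_of_monomial {m : ℕ} (f : Fin m → MvPolynomial (Fin n) K)
    (hf : ∀ j, ∃ s : Fin n →₀ ℕ, f j = monomial s 1)
    (u : MvPolynomial (Fin n) K) (hu : ∃ t : Fin n →₀ ℕ, u = monomial t 1)
    (hreg : (Ideal.span (Set.range f)).colon (Ideal.span {u}) = Ideal.span (Set.range f)) :
    ∀ (e : ℕ) (w : MvPolynomial (Fin n) K),
      u * w ∈ Ideal.span (Set.range f) ^ e → w ∈ Ideal.span (Set.range f) ^ e := by
  classical
  obtain ⟨t, rfl⟩ := hu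
  set I := Ideal.span (Set.range f) with hI
  have hcol : ∀ w : MvPolynomial (Fin n) K, w * monomial t 1 ∈ I → w ∈ I := by
    intro w hw
    rw [← hreg]
    exact Ideal.mem_colon_span_singleton.mpr hw
  have hcolN : ∀ (N : ℕ) (w : MvPolynomial (Fin n) K), w * (monomial t 1) ^ N ∈ I → w ∈ I := by
    intro N
    induction N with
    | zero => intro w hw; simpa using hw
    | succ N ih =>
      intro w hw
      rw [pow_succ, ← mul_assoc] at hw
      exact ih w (hcol _ hw)
  choose sf hsf using hf
  set s' : Fin m → (Fin n →₀ ℕ) := fun j => (sf j).filter (fun x => t x = 0) with hs'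
  have hs'apply : ∀ j x, t x ≠ 0 → s' j x = 0 := by
    intro j x hx
    simp [hs', Finsupp.filter_apply_neg, hx]
  have hs'apply0 : ∀ j x, t x = 0 → s' j x = sf j x := by
    intro j x hx
    simp [hs', Finsupp.filter_apply_pos, hx]
  have hs'le : ∀ j, s' j ≤ sf j := by
    intro j
    rw [Finsupp.le_def]
    intro x
    by_cases hx : t x = 0
    · rw [hs'apply0 j x hx]
    · rw [hs'apply j x hx]
      exact Nat.zero_le _
  have hf'mem : ∀ j, (monomial (s' j) 1 : MvPolynomial (Fin n) K) ∈ I := by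
    intro j
    set N := (sf j).degree with hN
    apply hcolN N
    have hle : sf j ≤ s' j + N • t := by
      rw [Finsupp.le_def]
      intro x
      by_cases hx : t x = 0
      · simp only [Finsupp.add_apply, Finsupp.smul_apply, smul_eq_mul, hx, mul_zero, add_zero,
          hs'apply0 j x hx, le_refl]
      · have h1 : (sf j) x ≤ N := Finsupp.le_degree x (sf j)
        have h2 : N ≤ N * t x := Nat.le_mul_of_pos_right _ (Nat.pos_of_ne_zero hx)
        simp only [Finsupp.add_apply, Finsupp.smul_apply, smul_eq_mul]
        omega
    have heq : (monomial (s' j) 1 : MvPolynomial (Fin n) K) * (monomial t 1) ^ N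
        = f j * monomial (s' j + N • t - sf j) 1 := by
      rw [monomial_pow, one_pow, monomial_mul, one_mul, hsf j, monomial_mul, one_mul]
      congr 1
      rw [add_tsub_cancel_of_le hle]
    rw [heq]
    exact Ideal.mul_mem_right _ _ (Ideal.subset_span (Set.mem_range_self j))
  have hIeq : I = Ideal.span (Set.range fun j => (monomial (s' j) 1 : MvPolynomial (Fin n) K)) := by
    apply le_antisymm
    · rw [hI, Ideal.span_le]
      rintro _ ⟨j, rfl⟩
      have heq : f j = monomial (s' j) 1 * monomial (sf j - s' j) 1 := by
        rw [monomial_mul, one_mul, add_tsub_cancel_of_le (hs'le j), hsf j]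
      rw [heq]
      exact Ideal.mul_mem_right _ _ (Ideal.subset_span (Set.mem_range_self j))
    · rw [Ideal.span_le]
      rintro _ ⟨j, rfl⟩
      exact hf'mem j
  have hA : ∀ e : ℕ, ∃ A : Set (Fin n →₀ ℕ), (∀ a ∈ A, ∀ x, t x ≠ 0 → a x = 0) ∧
      I ^ e = Ideal.span ((fun a => (monomial a 1 : MvPolynomial (Fin n) K)) '' A) := by
    intro e
    induction e with
    | zero =>
      refine ⟨{0}, by simp, ?_⟩
      rw [pow_zero, Ideal.one_eq_top, Set.image_singleton,
        show (monomial (0 : Fin n →₀ ℕ) (1 : K) : MvPolynomial (Fin n) K) = 1 from by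
          simp [monomial_zero']]
      exact (Ideal.span_singleton_one).symm
    | succ e ih =>
      obtain ⟨A, hA1, hA2⟩ := ih
      refine ⟨Set.image2 (· + ·) A (Set.range s'), ?_, ?_⟩
      · rintro _ ⟨a, ha, _, ⟨j, rfl⟩, rfl⟩ x hx
        rw [Finsupp.add_apply, hA1 a ha x hx, hs'apply j x hx]
      · rw [pow_succ, hA2, hIeq, Ideal.span_mul_span']
        congr 1
        ext p
        constructor
        · rintro ⟨x, ⟨a, ha, rfl⟩, y, ⟨j, rfl⟩, rfl⟩
          exact ⟨a + s' j, ⟨a, ha, s' j, ⟨j, rfl⟩, rfl⟩, by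
            show (monomial (a + s' j)) (1 : K) = monomial a 1 * monomial (s' j) 1
            rw [monomial_mul, one_mul]⟩
        · rintro ⟨_, ⟨a, ha, _, ⟨j, rfl⟩, rfl⟩, rfl⟩
          exact ⟨monomial a 1, ⟨a, ha, rfl⟩, monomial (s' j) 1, ⟨j, rfl⟩, by
            show monomial a 1 * monomial (s' j) 1 = (monomial (a + s' j)) (1 : K)
            rw [monomial_mul, one_mul]⟩
  intro e w hw
  obtain ⟨A, hA1, hA2⟩ := hA e
  rw [hA2] at hw ⊢
  rw [mem_ideal_span_monomial_image] at hw ⊢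
  intro d hd
  have hd' : d + t ∈ (monomial t 1 * w).support := by
    rw [mem_support_iff, mul_comm, coeff_mul_monomial, mul_one]
    exact mem_support_iff.mp hd
  obtain ⟨a, haA, hale⟩ := hw _ hd'
  refine ⟨a, haA, ?_⟩
  rw [Finsupp.le_def]
  intro x
  by_cases hx : t x = 0
  · have h3 := (Finsupp.le_def.mp hale) x
    rw [Finsupp.add_apply, hx] at h3
    omega
  · rw [hA1 a haA x hx]
    exact Nat.zero_le _

end Monomial

end Stmt10Aux

/-- For a monomial ideal `I ⊆ K[x₁,…,x_n]` and a monomial `u`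
which is a non-zerodivisor modulo `I` (i.e. `I : u = I`), there is a positive
integer `k` with `(C(I), uᵏ) ⊆ C((I,u))`. -/
theorem stmt_10 {K : Type} [Field K] {n m : ℕ}
    (f : Fin m → MvPolynomial (Fin n) K)
    (hf : ∀ j, ∃ s : Fin n →₀ ℕ, f j = MvPolynomial.monomial s 1)
    (I : Ideal (MvPolynomial (Fin n) K)) (hI : I = Ideal.span (Set.range f))
    (u : MvPolynomial (Fin n) K) (hu : ∃ t : Fin n →₀ ℕ, u = MvPolynomial.monomial t 1)
    (hreg : I.colon (Ideal.span {u}) = I) :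
    ∃ k : ℕ, 0 < k ∧
      conductorIdeal f ⊔ Ideal.span {u ^ k} ≤ conductorIdeal (Fin.snoc f u) := by
  classical
  subst hI
  obtain ⟨k, hk, hku⟩ := Stmt10Aux.exists_k f u
  have hcolon := Stmt10Aux.colon_pow_of_monomial f hf u hu hreg
  refine ⟨k, hk, sup_le ?_ ?_⟩
  · intro r hr
    have hr' : ∀ p ∈ reesJ f, MvPolynomial.C r * p ∈ linRel f := by
      intro p hp
      have h2 := Submodule.mem_colon.mp hr p hp
      rwa [MvPolynomial.smul_eq_C_mul] at h2
    refine Submodule.mem_colon.mpr ?_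
    intro p hp
    rw [SetLike.mem_coe, Submodule.restrictScalars_mem] at hp
    show r • p ∈ linRel (Fin.snoc f u)
    rw [MvPolynomial.smul_eq_C_mul]
    have hdec : MvPolynomial.C r * p = ∑ i ∈ Finset.range (p.totalDegree + 1),
        MvPolynomial.C r * MvPolynomial.homogeneousComponent i p := by
      rw [← Finset.mul_sum, MvPolynomial.sum_homogeneousComponent]
    rw [hdec]
    refine Submodule.sum_mem _ fun i _ => ?_
    exact Stmt10Aux.stepA f u hcolon r hr' i _
      (MvPolynomial.homogeneousComponent_isHomogeneous i p)
      (Stmt10Aux.homogeneousComponent_mem_reesJ _ hp i)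
  · rw [Ideal.span_singleton_le_iff_mem]
    refine Submodule.mem_colon.mpr ?_
    intro p hp
    rw [SetLike.mem_coe, Submodule.restrictScalars_mem] at hp
    show u ^ k • p ∈ linRel (Fin.snoc f u)
    rw [MvPolynomial.smul_eq_C_mul, map_pow]
    exact hku p hp
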